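/- For n ≥ 1 and k ∈ ℕ, the coefficient of the monomial Z^k (where Z = z₁z'₁ + ⋯ + z_n z'_n) in the Segal–Bargmann inner product satisfies ⟨Z^k, Z^l⟩ = δ_{k,l} · k! · (n+k−1)!/(n−1)!, i.e. π^{-2n} ∫_{ℂ^{2n}} e^{−|z|²−|z'|²} conj(Z^k) Z^l dz dz' = δ_{k,l} k! (n+k−1)!/(n−1)!. Consequently the states ψ_{k,n} = [(n−1)!/((n+k−1)! k!)]^{1/2} Z^k form an orthonormal family. -/

import Mathlib

open MeasureTheory
open scoped Nat

open Finset
open scoped Real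

noncomputable def f1 (a b : ℕ) (w : ℂ) : ℂ :=
  (starRingEnd ℂ w) ^ a * w ^ b * Real.exp (-‖w‖ ^ 2)

lemma integrable_gauss_half : Integrable (fun z : ℂ => Real.exp (-(1/2) * ‖z‖ ^ 2)) := by
  have h2 : Integrable (fun p : ℝ × ℝ =>
      Real.exp (-(1/2) * p.1 ^ 2) * Real.exp (-(1/2) * p.2 ^ 2)) := by
    rw [Measure.volume_eq_prod]
    exact (integrable_exp_neg_mul_sq (by norm_num)).mul_prod
      (integrable_exp_neg_mul_sq (by norm_num))
  have h3 : Integrable (fun p : ℝ × ℝ => Real.exp (-(1/2) * (p.1 ^ 2 + p.2 ^ 2))) := by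
    refine h2.congr ?_
    filter_upwards with p
    rw [← Real.exp_add]; ring_nf
  have := (Complex.volume_preserving_equiv_real_prod.integrable_comp_emb
    Complex.measurableEquivRealProd.measurableEmbedding).2 h3
  refine this.congr ?_
  filter_upwards with z
  simp only [Function.comp_apply, Complex.measurableEquivRealProd_apply]
  congr 2
  simp [Complex.sq_norm, Complex.normSq_apply]; ring

lemma integrable_norm_pow_gauss (m : ℕ) :
    Integrable (fun z : ℂ => ‖z‖ ^ m * Real.exp (-‖z‖ ^ 2)) := by
  have hb : ∀ t : ℝ, 0 ≤ t → t ^ m * Real.exp (-t ^ 2) ≤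
      (m ! * Real.exp (1/2)) * Real.exp (-(1/2) * t ^ 2) := by
    intro t ht
    have h1 : t ^ m ≤ m ! * Real.exp t := by
      have := Real.pow_div_factorial_le_exp t ht m
      rw [div_le_iff₀ (by positivity)] at this
      calc t ^ m ≤ Real.exp t * m ! := this
        _ = m ! * Real.exp t := by ring
    calc t ^ m * Real.exp (-t ^ 2) ≤ (m ! * Real.exp t) * Real.exp (-t ^ 2) := by
          apply mul_le_mul_of_nonneg_right h1 (Real.exp_pos _).le
      _ = m ! * Real.exp (t - t^2) := by rw [mul_assoc, ← Real.exp_add]; ring_nf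
      _ ≤ (m ! * Real.exp (1/2)) * Real.exp (-(1/2) * t ^ 2) := by
          rw [mul_assoc, ← Real.exp_add]
          apply mul_le_mul_of_nonneg_left (Real.exp_le_exp.2 (by nlinarith [sq_nonneg (t-1)])) (by positivity)
  refine (integrable_gauss_half.const_mul (m ! * Real.exp (1/2))).mono' ?_ ?_
  · exact ((continuous_norm.pow m).mul
      (((continuous_norm.pow 2).neg).rexp)).aestronglyMeasurable
  · filter_upwards with z
    rw [Real.norm_eq_abs, abs_of_nonneg (by positivity)]
    exact hb ‖z‖ (norm_nonneg z)

lemma integrable_f1 (a b : ℕ) : Integrable (f1 a b) := by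
  refine (integrable_norm_pow_gauss (a + b)).mono' ?_ ?_
  · apply Continuous.aestronglyMeasurable
    unfold f1
    simp only [starRingEnd_apply]
    exact ((continuous_star.pow a).mul (continuous_pow b)).mul
      (Complex.continuous_ofReal.comp (Real.continuous_exp.comp (continuous_norm.pow 2).neg))
  · filter_upwards with z
    have h : ‖f1 a b z‖ = ‖z‖ ^ (a+b) * Real.exp (-‖z‖ ^ 2) := by
      simp only [f1, norm_mul, norm_pow, Complex.norm_conj,
        Complex.norm_real, Real.norm_eq_abs, Real.abs_exp, pow_add]
      try ring
    rw [h]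

lemma f1_integral (a b : ℕ) :
    ∫ z : ℂ, f1 a b z = if a = b then ((Real.pi * a ! : ℝ) : ℂ) else 0 := by
  have hrint : ∫ r in Set.Ioi (0:ℝ), r ^ (a+b+1) * Real.exp (-r^2)
      = (1/2) * Real.Gamma ((a+b+2)/2) := by
    have hcong : ∀ r ∈ Set.Ioi (0:ℝ), r ^ (a+b+1) * Real.exp (-r^2)
        = r ^ ((a+b+1 : ℕ) : ℝ) * Real.exp (-r ^ (2:ℝ)) := by
      intro r hr
      rw [Real.rpow_natCast, show (2:ℝ) = ((2:ℕ):ℝ) by norm_num, Real.rpow_natCast]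
    rw [setIntegral_congr_fun measurableSet_Ioi hcong,
      integral_rpow_mul_exp_neg_rpow (by norm_num) (by push_cast; linarith)]
    norm_num
    congr 1
    push_cast; ring
  rw [← Complex.integral_comp_polarCoord_symm, polarCoord_target]
  have key : (∫ p in Set.Ioi (0:ℝ) ×ˢ Set.Ioo (-π) π, p.1 • f1 a b (Complex.polarCoord.symm p))
      = (∫ r in Set.Ioi (0:ℝ), ((r ^ (a+b+1) * Real.exp (-r^2) : ℝ) : ℂ)) *
        (∫ θ in Set.Ioo (-π) π, Complex.exp ((((b:ℤ) - (a:ℤ) : ℤ) : ℂ) * θ * Complex.I)) := by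
    rw [← setIntegral_prod_mul, ← Measure.volume_eq_prod]
    apply setIntegral_congr_fun (measurableSet_Ioi.prod measurableSet_Ioo)
    rintro ⟨r, θ⟩ ⟨hr, hθ⟩
    simp only [Set.mem_Ioi] at hr
    have e1 : Complex.polarCoord.symm (r, θ) = (r : ℂ) * Complex.exp (θ * Complex.I) := by
      rw [Complex.polarCoord_symm_apply, Complex.exp_mul_I, Complex.ofReal_cos,
        Complex.ofReal_sin]
    have habs : ‖(r:ℂ) * Complex.exp (↑θ * Complex.I)‖ = r := by
      rw [norm_mul, Complex.norm_exp]
      simp [abs_of_pos hr]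
    have hconj : (starRingEnd ℂ) ((r:ℂ) * Complex.exp (↑θ * Complex.I))
        = (r:ℂ) * Complex.exp (-(↑θ * Complex.I)) := by
      rw [map_mul, Complex.conj_ofReal, ← Complex.exp_conj]
      congr 1
      simp [Complex.ext_iff]
    have hexp : Complex.exp (-(↑θ * Complex.I)) ^ a * Complex.exp (↑θ * Complex.I) ^ b
        = Complex.exp ((((b:ℤ) - (a:ℤ) : ℤ) : ℂ) * ↑θ * Complex.I) := by
      rw [← Complex.exp_nat_mul, ← Complex.exp_nat_mul, ← Complex.exp_add]
      congr 1
      push_cast; ring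
    show (r : ℝ) • f1 a b (Complex.polarCoord.symm (r, θ)) = _
    unfold f1
    rw [e1, hconj, habs, Complex.real_smul, mul_pow, mul_pow]
    push_cast at hexp ⊢
    linear_combination ((r:ℂ) ^ (a+b+1) * Complex.exp (-(r:ℂ)^2)) * hexp
  rw [key, show (∫ r in Set.Ioi (0:ℝ), ((r ^ (a+b+1) * Real.exp (-r^2) : ℝ) : ℂ))
      = ((∫ r in Set.Ioi (0:ℝ), r ^ (a+b+1) * Real.exp (-r^2) : ℝ) : ℂ) from integral_ofReal,
    hrint]
  rcases eq_or_ne a b with rfl | hab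
  · rw [if_pos rfl]
    have hθ : (∫ θ in Set.Ioo (-π) π, Complex.exp ((((a:ℤ) - (a:ℤ) : ℤ) : ℂ) * θ * Complex.I))
        = ((2 * π : ℝ) : ℂ) := by
      simp only [sub_self, Int.cast_zero, zero_mul, Complex.exp_zero]
      rw [setIntegral_const]
      rw [Real.volume_real_Ioo_of_le (by linarith [Real.pi_pos])]
      rw [show ((π - -π) • (1:ℂ)) = ((π - -π : ℝ) : ℂ) * 1 from Complex.real_smul]
      push_cast
      ring
    rw [hθ]
    have : Real.Gamma ((a+a+2)/2) = a ! := by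
      rw [show ((a:ℝ)+a+2)/2 = a + 1 by ring, Real.Gamma_nat_eq_factorial]
    rw [this]
    push_cast
    ring
  · rw [if_neg hab]
    have hm : ((b:ℤ) - (a:ℤ)) ≠ 0 := sub_ne_zero.2 fun h => hab (by exact_mod_cast h.symm)
    have hmc : (((b:ℤ) - (a:ℤ) : ℤ) : ℂ) * Complex.I ≠ 0 :=
      mul_ne_zero (by exact_mod_cast hm) Complex.I_ne_zero
    have hθ : (∫ θ in Set.Ioo (-π) π, Complex.exp ((((b:ℤ) - (a:ℤ) : ℤ) : ℂ) * θ * Complex.I))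
        = 0 := by
      have hrw : ∀ θ : ℝ, (((b:ℤ) - (a:ℤ) : ℤ) : ℂ) * θ * Complex.I
          = ((((b:ℤ) - (a:ℤ) : ℤ) : ℂ) * Complex.I) * θ := by intro θ; ring
      simp_rw [hrw]
      rw [← integral_Ioc_eq_integral_Ioo,
        ← intervalIntegral.integral_of_le (by linarith [Real.pi_pos] : -π ≤ π),
        integral_exp_mul_complex hmc]
      have h1 : ((((b:ℤ) - (a:ℤ) : ℤ) : ℂ) * Complex.I) * (π : ℂ)
          = (((b:ℤ) - (a:ℤ) : ℤ) : ℂ) * ((π : ℂ) * Complex.I) := by ring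
      have h2 : ((((b:ℤ) - (a:ℤ) : ℤ) : ℂ) * Complex.I) * ((-π : ℝ) : ℂ)
          = ((-((b:ℤ) - (a:ℤ)) : ℤ) : ℂ) * ((π : ℂ) * Complex.I) := by push_cast; ring
      rw [h1, h2, Complex.exp_int_mul, Complex.exp_int_mul, Complex.exp_pi_mul_I]
      rw [zpow_neg, ← inv_zpow, show ((-1:ℂ))⁻¹ = -1 by norm_num, sub_self, zero_div]
    rw [hθ, mul_zero]

/-- `Z = ∑ᵢ zᵢ z'ᵢ` evaluated at a point of `ℂⁿ × ℂⁿ`. -/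
noncomputable def Zval {n : ℕ} (zz : (Fin n → ℂ) × (Fin n → ℂ)) : ℂ := ∑ i, zz.1 i * zz.2 i

/-- The normalized state `ψ_{k,n} = [(n−1)!/((n+k−1)! k!)]^{1/2} Z^k` evaluated at a point. -/
noncomputable def psiVal (n k : ℕ) (zz : (Fin n → ℂ) × (Fin n → ℂ)) : ℂ :=
  (Real.sqrt (((n - 1)! : ℝ) / (((n + k - 1)! : ℝ) * (k ! : ℝ))) : ℂ) * (Zval zz) ^ k

lemma card_piAntidiag_univ (n k : ℕ) :
    (piAntidiag (univ : Finset (Fin n)) k).card = (n + k - 1).choose k := by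
  classical
  rw [← map_sym_eq_piAntidiag, Finset.card_map, Finset.sym_univ, Finset.card_univ,
    Sym.card_sym_eq_choose, Fintype.card_fin]

lemma integrand_expand {n : ℕ} (k l : ℕ) (zz : (Fin n → ℂ) × (Fin n → ℂ)) :
    Real.exp (-(∑ i, ‖zz.1 i‖ ^ 2) - ∑ i, ‖zz.2 i‖ ^ 2) •
      (starRingEnd ℂ ((Zval zz) ^ k) * (Zval zz) ^ l)
    = ∑ p ∈ (piAntidiag (univ : Finset (Fin n)) k) ×ˢ (piAntidiag (univ : Finset (Fin n)) l),
        ((Nat.multinomial univ p.1 : ℂ) * (Nat.multinomial univ p.2 : ℂ)) *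
          ((∏ i, f1 (p.1 i) (p.2 i) (zz.1 i)) * (∏ i, f1 (p.1 i) (p.2 i) (zz.2 i))) := by
  classical
  rw [Finset.sum_product]
  have hZk : (starRingEnd ℂ) (Zval zz ^ k) =
      ∑ α ∈ piAntidiag (univ : Finset (Fin n)) k, (Nat.multinomial univ α : ℂ) *
        ∏ i, ((starRingEnd ℂ) (zz.1 i) * (starRingEnd ℂ) (zz.2 i)) ^ α i := by
    rw [map_pow, Zval, map_sum]
    simp only [map_mul]
    exact Finset.sum_pow_eq_sum_piAntidiag univ _ k
  have hZl : (Zval zz) ^ l = ∑ β ∈ piAntidiag (univ : Finset (Fin n)) l,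
      (Nat.multinomial univ β : ℂ) * ∏ i, (zz.1 i * zz.2 i) ^ β i := by
    rw [Zval]; exact Finset.sum_pow_eq_sum_piAntidiag univ _ l
  have hE : Real.exp (-(∑ i, ‖zz.1 i‖ ^ 2) - ∑ i, ‖zz.2 i‖ ^ 2)
      = (∏ i, Real.exp (-‖zz.1 i‖ ^ 2)) * ∏ i, Real.exp (-‖zz.2 i‖ ^ 2) := by
    rw [← Real.exp_sum, ← Real.exp_sum, ← Real.exp_add]
    congr 1
    rw [Finset.sum_neg_distrib, Finset.sum_neg_distrib]
    ring
  rw [hZk, hZl, Finset.sum_mul_sum, hE, Finset.smul_sum]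
  refine Finset.sum_congr rfl fun α hα => ?_
  rw [Finset.smul_sum]
  refine Finset.sum_congr rfl fun β hβ => ?_
  rw [Complex.real_smul]
  simp only [f1, mul_pow, Finset.prod_mul_distrib]
  push_cast
  ring

lemma main1 (n : ℕ) (hn : 1 ≤ n) (k l : ℕ) :
    ((1 / Real.pi ^ (2 * n) : ℝ) •
      ∫ zz : (Fin n → ℂ) × (Fin n → ℂ),
        Real.exp (-(∑ i, ‖zz.1 i‖ ^ 2) - ∑ i, ‖zz.2 i‖ ^ 2) •
          (starRingEnd ℂ ((Zval zz) ^ k) * (Zval zz) ^ l)) =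
      (if k = l then ((k ! : ℂ) * ((n + k - 1)! : ℂ) / ((n - 1)! : ℂ)) else 0) := by
  classical
  have hpi : (Real.pi : ℂ) ≠ 0 := by exact_mod_cast Real.pi_ne_zero
  have step1 : (∫ zz : (Fin n → ℂ) × (Fin n → ℂ),
      Real.exp (-(∑ i, ‖zz.1 i‖ ^ 2) - ∑ i, ‖zz.2 i‖ ^ 2) •
        (starRingEnd ℂ ((Zval zz) ^ k) * (Zval zz) ^ l))
      = ∑ p ∈ (piAntidiag (univ : Finset (Fin n)) k) ×ˢ (piAntidiag (univ : Finset (Fin n)) l),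
          ((Nat.multinomial univ p.1 : ℂ) * (Nat.multinomial univ p.2 : ℂ)) *
            ((∏ i, (if p.1 i = p.2 i then ((Real.pi * (p.1 i)! : ℝ) : ℂ) else 0)) *
             (∏ i, (if p.1 i = p.2 i then ((Real.pi * (p.1 i)! : ℝ) : ℂ) else 0))) := by
    calc (∫ zz : (Fin n → ℂ) × (Fin n → ℂ),
        Real.exp (-(∑ i, ‖zz.1 i‖ ^ 2) - ∑ i, ‖zz.2 i‖ ^ 2) •
          (starRingEnd ℂ ((Zval zz) ^ k) * (Zval zz) ^ l))
        = ∫ zz : (Fin n → ℂ) × (Fin n → ℂ),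
            ∑ p ∈ (piAntidiag (univ : Finset (Fin n)) k) ×ˢ (piAntidiag (univ : Finset (Fin n)) l),
              ((Nat.multinomial univ p.1 : ℂ) * (Nat.multinomial univ p.2 : ℂ)) *
                ((∏ i, f1 (p.1 i) (p.2 i) (zz.1 i)) * (∏ i, f1 (p.1 i) (p.2 i) (zz.2 i))) := by
          apply integral_congr_ae
          filter_upwards with zz
          exact integrand_expand k l zz
      _ = ∑ p ∈ (piAntidiag (univ : Finset (Fin n)) k) ×ˢ (piAntidiag (univ : Finset (Fin n)) l),
            ∫ zz : (Fin n → ℂ) × (Fin n → ℂ),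
              ((Nat.multinomial univ p.1 : ℂ) * (Nat.multinomial univ p.2 : ℂ)) *
                ((∏ i, f1 (p.1 i) (p.2 i) (zz.1 i)) * (∏ i, f1 (p.1 i) (p.2 i) (zz.2 i))) := by
          refine integral_finset_sum _ fun p _ => ?_
          have h1 : Integrable (fun z : Fin n → ℂ => ∏ i, f1 (p.1 i) (p.2 i) (z i)) :=
            Integrable.fintype_prod (fun i => integrable_f1 (p.1 i) (p.2 i))
          have h2 := h1.mul_prod h1
          rw [← Measure.volume_eq_prod] at h2
          exact h2.const_mul _
      _ = _ := by
          refine Finset.sum_congr rfl fun p _ => ?_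
          rw [integral_const_mul, Measure.volume_eq_prod,
            MeasureTheory.integral_prod_mul (f := fun z : Fin n → ℂ => ∏ i, f1 (p.1 i) (p.2 i) (z i))
              (g := fun z : Fin n → ℂ => ∏ i, f1 (p.1 i) (p.2 i) (z i)),
            MeasureTheory.volume_pi, MeasureTheory.integral_fintype_prod_eq_prod]
          congr 2 <;>
          · refine Finset.prod_congr rfl fun i _ => ?_
            exact f1_integral _ _
  rcases eq_or_ne k l with rfl | hkl
  · rw [if_pos rfl, step1, Finset.sum_product]
    have hdiag : ∀ α ∈ piAntidiag (univ : Finset (Fin n)) k,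
        (∑ β ∈ piAntidiag (univ : Finset (Fin n)) k,
          ((Nat.multinomial univ α : ℂ) * (Nat.multinomial univ β : ℂ)) *
            ((∏ i, (if α i = β i then ((Real.pi * (α i)! : ℝ) : ℂ) else 0)) *
             (∏ i, (if α i = β i then ((Real.pi * (α i)! : ℝ) : ℂ) else 0))))
        = (Real.pi : ℂ) ^ (2 * n) * (k ! : ℂ) ^ 2 := by
      intro α hα
      rw [Finset.sum_eq_single_of_mem α hα]
      · have hprod : (∏ i, (if α i = α i then ((Real.pi * (α i)! : ℝ) : ℂ) else 0))
            = (Real.pi : ℂ) ^ n * ∏ i, ((α i)! : ℂ) := by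
          simp only [if_pos rfl]
          push_cast
          rw [Finset.prod_mul_distrib, Finset.prod_const, Finset.card_univ, Fintype.card_fin]
        have hmult : (Nat.multinomial univ α : ℂ) * ∏ i, ((α i)! : ℂ) = (k ! : ℂ) := by
          have hspec := Nat.multinomial_spec univ α
          have hsum : ∑ i, α i = k := (mem_piAntidiag.1 hα).1
          rw [hsum] at hspec
          push_cast [← hspec]
          ring
        rw [hprod]
        calc (Nat.multinomial univ α : ℂ) * (Nat.multinomial univ α : ℂ) *
              (((Real.pi : ℂ) ^ n * ∏ i, ((α i)! : ℂ)) * ((Real.pi : ℂ) ^ n * ∏ i, ((α i)! : ℂ)))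
            = (Real.pi : ℂ) ^ (2 * n) *
              (((Nat.multinomial univ α : ℂ) * ∏ i, ((α i)! : ℂ)) *
               ((Nat.multinomial univ α : ℂ) * ∏ i, ((α i)! : ℂ))) := by
              rw [two_mul, pow_add]; ring
          _ = (Real.pi : ℂ) ^ (2 * n) * (k ! : ℂ) ^ 2 := by rw [hmult]; ring
      · intro β hβ hne
        have : ∃ i, α i ≠ β i := by
          by_contra h
          push_neg at h
          exact hne (funext fun i => (h i).symm)
        obtain ⟨i, hi⟩ := this
        have hz : (∏ j, (if α j = β j then ((Real.pi * (α j)! : ℝ) : ℂ) else 0)) = 0 :=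
          Finset.prod_eq_zero (Finset.mem_univ i) (if_neg hi)
        rw [hz]
        ring
    rw [Finset.sum_congr rfl hdiag, Finset.sum_const, card_piAntidiag_univ, nsmul_eq_mul]
    have hval : (((n + k - 1).choose k : ℕ) : ℂ) * ((k ! : ℂ)) ^ 2
        = (k ! : ℂ) * ((n + k - 1)! : ℂ) / ((n - 1)! : ℂ) := by
      have h1 : (n + k - 1).choose k * k ! * (n - 1)! = (n + k - 1)! := by
        have h := Nat.choose_mul_factorial_mul_factorial (show k ≤ n + k - 1 by omega)
        rwa [show n + k - 1 - k = n - 1 by omega] at h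
      have h1' : (((n + k - 1).choose k : ℕ) : ℂ) * (k ! : ℂ) * ((n - 1)! : ℂ)
          = ((n + k - 1)! : ℂ) := by exact_mod_cast h1
      have h2 : ((n - 1)! : ℂ) ≠ 0 := by exact_mod_cast Nat.factorial_ne_zero _
      field_simp
      linear_combination (k ! : ℂ) * h1'
    rw [Complex.real_smul]
    rw [show ((1 / Real.pi ^ (2 * n) : ℝ) : ℂ) = 1 / (Real.pi : ℂ) ^ (2 * n) by push_cast; ring]
    rw [show (1 / (Real.pi : ℂ) ^ (2 * n)) * ((((n + k - 1).choose k : ℕ) : ℂ) *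
        ((Real.pi : ℂ) ^ (2 * n) * (k ! : ℂ) ^ 2))
        = (((n + k - 1).choose k : ℕ) : ℂ) * ((k ! : ℂ)) ^ 2 by
      field_simp]
    exact hval
  · rw [if_neg hkl, step1, Finset.sum_eq_zero, smul_zero]
    intro p hp
    obtain ⟨h1, h2⟩ := Finset.mem_product.1 hp
    have hs1 : ∑ i, p.1 i = k := (mem_piAntidiag.1 h1).1
    have hs2 : ∑ i, p.2 i = l := (mem_piAntidiag.1 h2).1
    have : ∃ i, p.1 i ≠ p.2 i := by
      by_contra h
      push_neg at h
      exact hkl (by rw [← hs1, ← hs2]; exact Finset.sum_congr rfl fun i _ => h i)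
    obtain ⟨i, hi⟩ := this
    have hz : (∏ j, (if p.1 j = p.2 j then ((Real.pi * (p.1 j)! : ℝ) : ℂ) else 0)) = 0 :=
      Finset.prod_eq_zero (Finset.mem_univ i) (if_neg hi)
    rw [hz]
    ring

theorem segal_bargmann_Z_powers (n : ℕ) (hn : 1 ≤ n) (k l : ℕ) :
    ((1 / Real.pi ^ (2 * n) : ℝ) •
      ∫ zz : (Fin n → ℂ) × (Fin n → ℂ),
        Real.exp (-(∑ i, ‖zz.1 i‖ ^ 2) - ∑ i, ‖zz.2 i‖ ^ 2) •
          (starRingEnd ℂ ((Zval zz) ^ k) * (Zval zz) ^ l)) =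
      (if k = l then ((k ! : ℂ) * ((n + k - 1)! : ℂ) / ((n - 1)! : ℂ)) else 0) ∧
    ((1 / Real.pi ^ (2 * n) : ℝ) •
      ∫ zz : (Fin n → ℂ) × (Fin n → ℂ),
        Real.exp (-(∑ i, ‖zz.1 i‖ ^ 2) - ∑ i, ‖zz.2 i‖ ^ 2) •
          (starRingEnd ℂ (psiVal n k zz) * psiVal n l zz)) =
      (if k = l then (1 : ℂ) else 0) := by
  refine ⟨main1 n hn k l, ?_⟩
  set sk : ℝ := Real.sqrt (((n - 1)! : ℝ) / (((n + k - 1)! : ℝ) * (k ! : ℝ))) with hsk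
  set sl : ℝ := Real.sqrt (((n - 1)! : ℝ) / (((n + l - 1)! : ℝ) * (l ! : ℝ))) with hsl
  have hpoint : ∀ zz : (Fin n → ℂ) × (Fin n → ℂ),
      Real.exp (-(∑ i, ‖zz.1 i‖ ^ 2) - ∑ i, ‖zz.2 i‖ ^ 2) •
        (starRingEnd ℂ (psiVal n k zz) * psiVal n l zz)
      = ((sk * sl : ℝ) : ℂ) *
        (Real.exp (-(∑ i, ‖zz.1 i‖ ^ 2) - ∑ i, ‖zz.2 i‖ ^ 2) •
          (starRingEnd ℂ ((Zval zz) ^ k) * (Zval zz) ^ l)) := by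
    intro zz
    unfold psiVal
    rw [map_mul, map_pow, Complex.conj_ofReal, ← hsk, ← hsl, ← map_pow]
    simp only [Complex.real_smul]
    push_cast
    ring
  have hstep : (∫ zz : (Fin n → ℂ) × (Fin n → ℂ),
      Real.exp (-(∑ i, ‖zz.1 i‖ ^ 2) - ∑ i, ‖zz.2 i‖ ^ 2) •
        (starRingEnd ℂ (psiVal n k zz) * psiVal n l zz))
      = ((sk * sl : ℝ) : ℂ) * ∫ zz : (Fin n → ℂ) × (Fin n → ℂ),
          Real.exp (-(∑ i, ‖zz.1 i‖ ^ 2) - ∑ i, ‖zz.2 i‖ ^ 2) •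
            (starRingEnd ℂ ((Zval zz) ^ k) * (Zval zz) ^ l) := by
    rw [← integral_const_mul]
    exact integral_congr_ae (Filter.Eventually.of_forall hpoint)
  rw [hstep, ← mul_smul_comm, main1 n hn k l]
  rcases eq_or_ne k l with rfl | hkl
  · rw [if_pos rfl, if_pos rfl]
    have hss : sk * sl = ((n - 1)! : ℝ) / (((n + k - 1)! : ℝ) * (k ! : ℝ)) := by
      rw [hsk, hsl]
      exact Real.mul_self_sqrt (by positivity)
    rw [hss]
    have h1 : ((n - 1)! : ℂ) ≠ 0 := by exact_mod_cast Nat.factorial_ne_zero _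
    have h2 : ((n + k - 1)! : ℂ) ≠ 0 := by exact_mod_cast Nat.factorial_ne_zero _
    have h3 : ((k ! : ℂ)) ≠ 0 := by exact_mod_cast Nat.factorial_ne_zero _
    push_cast
    field_simp
  · rw [if_neg hkl, if_neg hkl, mul_zero]
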